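/- In the ear setup, let α ∈ U₁ and β ∈ U₂, let K be a semifield and f : diag(P) → K any map. Then the map S defined by S(α,ζ,η,π₄,…,π_p) = (η,π₄,…,π_p) is a bijection from {π ∈ T(α→β) : π₂ = ζ and π₃ = η} to {ρ ∈ T(η→β) : ρ₂ ≠ ζ}, and every π in its domain satisfies (f(α,ζ)/f(ζ,η)) · f(S(π)) = f(π). -/

import Mathlib

/-!
Common definitions: polygons with vertex set `ZMod n`, crossing of diagonals,
dissections, (weak) friezes with values in a semifield, and T-paths.
-/

/-- A *semifield* in the sense of the paper: a set `K` with a commutative, associative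
addition and a multiplication making `K` a commutative group, such that multiplication
distributes over addition.  (There is no zero and no subtraction.) -/
class PaperSemifield (K : Type*) extends CommGroup K, AddCommSemigroup K where
  mul_add' : ∀ a b c : K, a * (b + c) = a * b + a * c

/-- Position of the vertex `x` of the `n`-gon relative to the vertex `a`, going around
the polygon in the positive direction; `relPos n a x = 0` iff `x = a`. -/
def relPos (n : ℕ) (a x : ZMod n) : ℕ := (x - a).val

/-- The vertices `a, b, c, d` of the `n`-gon appear strictly in this cyclic order. -/
def CyclicallyOrdered (n : ℕ) (a b c d : ZMod n) : Prop :=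
  0 < relPos n a b ∧ relPos n a b < relPos n a c ∧ relPos n a c < relPos n a d

/-- The diagonals `{a,b}` and `{c,d}` of the `n`-gon *cross*: the four vertices are
distinct and appear in the cyclic order `a, c, b, d` or `a, d, b, c`. -/
def Crosses (n : ℕ) (a b c d : ZMod n) : Prop :=
  CyclicallyOrdered n a c b d ∨ CyclicallyOrdered n a d b c

/-- `{a, b}` is an edge of the `n`-gon, i.e. joins neighbouring vertices. -/
def IsEdge (n : ℕ) (a b : ZMod n) : Prop := b = a + 1 ∨ a = b + 1

/-- `{a, b}` is an internal diagonal of the `n`-gon. -/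
def IsInternalDiag (n : ℕ) (a b : ZMod n) : Prop := a ≠ b ∧ ¬ IsEdge n a b

/-- `w'` is the successor of `w` in the induced cyclic order of the subpolygon of the
`n`-gon with vertex set `W`. -/
def NextIn (n : ℕ) (W : Set (ZMod n)) (w w' : ZMod n) : Prop :=
  w ∈ W ∧ w' ∈ W ∧ w' ≠ w ∧ ∀ u ∈ W, relPos n w u = 0 ∨ relPos n w w' ≤ relPos n w u

/-- `D` is a dissection of the subpolygon of the `n`-gon with vertex set `W`: a set of
pairwise non-crossing diagonals of the subpolygon joining non-neighbouring vertices. -/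
def IsDissectionOf (n : ℕ) (W : Set (ZMod n)) (D : Set (Sym2 (ZMod n))) : Prop :=
  (∀ a b, s(a, b) ∈ D → a ∈ W ∧ b ∈ W ∧ a ≠ b ∧ ¬ NextIn n W a b ∧ ¬ NextIn n W b a) ∧
  (∀ a b c d, s(a, b) ∈ D → s(c, d) ∈ D → ¬ Crosses n a b c d)

/-- `D` is a dissection of the `n`-gon. -/
def IsDissection (n : ℕ) (D : Set (Sym2 (ZMod n))) : Prop :=
  IsDissectionOf n Set.univ D

/-- `f` is symmetric on pairs of vertices from `W`, i.e. represents a map defined on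
unordered diagonals of the subpolygon with vertex set `W`. -/
def SymmOn (n : ℕ) {K : Type*} (W : Set (ZMod n)) (f : ZMod n → ZMod n → K) : Prop :=
  ∀ a b, a ∈ W → b ∈ W → f a b = f b a

/-- The Ptolemy relation for `f` at the crossing diagonals `{a,b}` and `{c,d}`. -/
def PtolemyRel {n : ℕ} {K : Type*} [Mul K] [Add K]
    (f : ZMod n → ZMod n → K) (a b c d : ZMod n) : Prop :=
  f a b * f c d = f a c * f b d + f a d * f b c

/-- `f` is a weak frieze on the subpolygon with vertex set `W` with respect to `D`:
the Ptolemy relation holds whenever `{a,b}` and `{c,d}` are crossing diagonals of the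
subpolygon with `{c,d} ∈ D`. -/
def IsWeakFriezeOn (n : ℕ) {K : Type*} [Mul K] [Add K] (W : Set (ZMod n))
    (D : Set (Sym2 (ZMod n))) (f : ZMod n → ZMod n → K) : Prop :=
  ∀ a b c d : ZMod n, a ∈ W → b ∈ W → c ∈ W → d ∈ W →
    Crosses n a b c d → s(c, d) ∈ D → PtolemyRel f a b c d

/-- `f` is a weak frieze on the `n`-gon with respect to the dissection `D`. -/
def IsWeakFrieze (n : ℕ) {K : Type*} [Mul K] [Add K]
    (D : Set (Sym2 (ZMod n))) (f : ZMod n → ZMod n → K) : Prop :=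
  IsWeakFriezeOn n Set.univ D f

/-- `f` is a frieze on the subpolygon with vertex set `W`: the Ptolemy relation holds
for all crossing diagonals of the subpolygon. -/
def IsFriezeOn (n : ℕ) {K : Type*} [Mul K] [Add K] (W : Set (ZMod n))
    (f : ZMod n → ZMod n → K) : Prop :=
  ∀ a b c d : ZMod n, a ∈ W → b ∈ W → c ∈ W → d ∈ W →
    Crosses n a b c d → PtolemyRel f a b c d

/-- `f` is a frieze on the `n`-gon. -/
def IsFrieze (n : ℕ) {K : Type*} [Mul K] [Add K] (f : ZMod n → ZMod n → K) : Prop :=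
  IsFriezeOn n Set.univ f

/-- The vertices of the `n`-gon realised as a regular convex `n`-gon in the Euclidean
plane. -/
noncomputable def vtx (n : ℕ) (a : ZMod n) : ℝ × ℝ :=
  (Real.cos (2 * Real.pi * (a.val : ℝ) / n), Real.sin (2 * Real.pi * (a.val : ℝ) / n))

/-- The point with parameter `t` on the segment from `A` to `B`. -/
def segPt (A B : ℝ × ℝ) (t : ℝ) : ℝ × ℝ :=
  ((1 - t) * A.1 + t * B.1, (1 - t) * A.2 + t * B.2)

/-- In the regular realisation of the `n`-gon, the diagonal `{c,d}` crosses the diagonal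
`{a,b}` at the interior point with parameter `t` along the segment from `a` to `b`. -/
def CrossesAt (n : ℕ) (a b c d : ZMod n) (t : ℝ) : Prop :=
  0 < t ∧ t < 1 ∧ ∃ s : ℝ, 0 < s ∧ s < 1 ∧
    segPt (vtx n a) (vtx n b) t = segPt (vtx n c) (vtx n d) s

/-- `l` is a T-path from `a` to `b` with respect to `D` in the subpolygon of the `n`-gon
with vertex set `W`.  Writing `p = l.length` and `π_i = l.getD (i-1) 0` (so the paper's
`π_1, …, π_p` are the entries of `l`), the conditions are: the path starts at `a` and
ends at `b`, uses vertices of `W`; (i) the consecutive pairs are pairwise different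
diagonals; (ii) no step crosses a diagonal in `D`; (iii) the steps starting at an
even position (in the paper's 1-based numbering) are diagonals in `D` which cross the
diagonal `{a,b}` at pairwise different points progressing monotonically in the
direction from `a` to `b`. -/
def IsTPathOn (n : ℕ) (W : Set (ZMod n)) (D : Set (Sym2 (ZMod n))) (a b : ZMod n)
    (l : List (ZMod n)) : Prop :=
  2 ≤ l.length ∧
  l.getD 0 0 = a ∧
  l.getD (l.length - 1) 0 = b ∧
  (∀ i, i < l.length → l.getD i 0 ∈ W) ∧
  (∀ i, i + 1 < l.length → l.getD i 0 ≠ l.getD (i + 1) 0) ∧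
  (∀ i j, i < j → j + 1 < l.length →
    s(l.getD i 0, l.getD (i + 1) 0) ≠ s(l.getD j 0, l.getD (j + 1) 0)) ∧
  (∀ i, i + 1 < l.length → ∀ c d, s(c, d) ∈ D →
    ¬ Crosses n (l.getD i 0) (l.getD (i + 1) 0) c d) ∧
  (∀ i, Odd i → i + 1 < l.length → s(l.getD i 0, l.getD (i + 1) 0) ∈ D) ∧
  (∃ t : ℕ → ℝ,
    (∀ i, Odd i → i + 1 < l.length → CrossesAt n a b (l.getD i 0) (l.getD (i + 1) 0) (t i)) ∧
    (∀ i j, Odd i → Odd j → i < j → j + 1 < l.length → t i < t j))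

/-- `l` is a T-path from `a` to `b` with respect to `D` in the `n`-gon. -/
def IsTPath (n : ℕ) (D : Set (Sym2 (ZMod n))) (a b : ZMod n) (l : List (ZMod n)) : Prop :=
  IsTPathOn n Set.univ D a b l

open Classical in
/-- The (finite) set of all T-paths from `a` to `b` with respect to `D` in the
subpolygon with vertex set `W`.  (Any T-path has pairwise different steps, hence has
length at most `n * n + 1`, so this finite set contains all of them.) -/
noncomputable def TPathFinsetOn (n : ℕ) [NeZero n] (W : Set (ZMod n))
    (D : Set (Sym2 (ZMod n))) (a b : ZMod n) : Finset (List (ZMod n)) :=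
  ((Finset.range (n * n + 2)).biUnion fun k =>
    (Finset.univ : Finset (Fin k → ZMod n)).image List.ofFn).filter (IsTPathOn n W D a b)

/-- The (finite) set of all T-paths from `a` to `b` with respect to `D` in the `n`-gon. -/
noncomputable def TPathFinset (n : ℕ) [NeZero n] (D : Set (Sym2 (ZMod n))) (a b : ZMod n) :
    Finset (List (ZMod n)) :=
  TPathFinsetOn n Set.univ D a b

/-- The weight `f(π)` of a T-path `l`: the product of the values of `f` on the steps at
odd positions (1-based) divided by the product of the values on the steps at even
positions. -/
def pathWeight (n : ℕ) {K : Type*} [CommGroup K] (f : ZMod n → ZMod n → K)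
    (l : List (ZMod n)) : K :=
  (∏ i ∈ (Finset.range (l.length - 1)).filter (fun i => Even i),
      f (l.getD i 0) (l.getD (i + 1) 0)) /
  (∏ i ∈ (Finset.range (l.length - 1)).filter (fun i => Odd i),
      f (l.getD i 0) (l.getD (i + 1) 0))

/-- `f` satisfies the T-path formula with respect to `D` on the subpolygon with vertex
set `W`: for all vertices `a ≠ b` of the subpolygon, `f a b` is the sum of the weights
of all T-paths from `a` to `b`.  Since the semifield `K` has no zero element, the sum is
computed in `WithZero K` (the sum is in fact always a sum of a nonempty collection). -/
def SatisfiesTPathFormulaOn (n : ℕ) [NeZero n] {K : Type*} [PaperSemifield K]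
    (W : Set (ZMod n)) (D : Set (Sym2 (ZMod n))) (f : ZMod n → ZMod n → K) : Prop :=
  ∀ a b : ZMod n, a ∈ W → b ∈ W → a ≠ b →
    WithZero.coe (f a b) = ∑ l ∈ TPathFinsetOn n W D a b, WithZero.coe (pathWeight n f l)

/-- `f` satisfies the T-path formula with respect to `D` on the `n`-gon. -/
def SatisfiesTPathFormula (n : ℕ) [NeZero n] {K : Type*} [PaperSemifield K]
    (D : Set (Sym2 (ZMod n))) (f : ZMod n → ZMod n → K) : Prop :=
  SatisfiesTPathFormulaOn n Set.univ D f

/-- `W` is the vertex set of one of the subpolygons into which the pairwise non-crossing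
internal diagonals `E` divide the `n`-gon: `W` has at least three vertices, consecutive
vertices of `W` are joined by an edge of the polygon or by a diagonal in `E`, and no
diagonal in `E` cuts through `W`. -/
def IsCell (n : ℕ) (E : Set (Sym2 (ZMod n))) (W : Set (ZMod n)) : Prop :=
  3 ≤ W.ncard ∧
  (∀ w w', NextIn n W w w' → (w' = w + 1 ∨ s(w, w') ∈ E)) ∧
  (∀ c d, s(c, d) ∈ E → c ∈ W → d ∈ W → (NextIn n W c d ∨ NextIn n W d c))

namespace EarAux

/-- cross product of `B - A` and `C - A`. -/
def cr (A B C : ℝ × ℝ) : ℝ := (B.1 - A.1) * (C.2 - A.2) - (B.2 - A.2) * (C.1 - A.1)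

lemma cr_rot (A B C : ℝ × ℝ) : cr A B C = cr B C A := by unfold cr; ring
lemma cr_swap (A B C : ℝ × ℝ) : cr A B C = - cr A C B := by unfold cr; ring
lemma cr_self (A C : ℝ × ℝ) : cr A A C = 0 := by unfold cr; ring
lemma cr_self' (A B : ℝ × ℝ) : cr A B A = 0 := by unfold cr; ring
lemma cr_self'' (A B : ℝ × ℝ) : cr A B B = 0 := by unfold cr; ring

section RelPos
variable {n : ℕ} [NeZero n]
set_option linter.unusedSectionVars false

lemma rp_lt (a x : ZMod n) : relPos n a x < n := ZMod.val_lt _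

lemma rp_eq_zero_iff {a x : ZMod n} : relPos n a x = 0 ↔ x = a := by
  unfold relPos
  rw [ZMod.val_eq_zero, sub_eq_zero]

lemma rp_inj {b x y : ZMod n} (h : relPos n b x = relPos n b y) : x = y := by
  have := ZMod.val_injective n (a₁ := x - b) (a₂ := y - b) h
  exact sub_left_injective this

/-- master re-basing formula. -/
lemma rp_base (b x y : ZMod n) :
    relPos n x y = if relPos n b x ≤ relPos n b y
      then relPos n b y - relPos n b x
      else relPos n b y + n - relPos n b x := by
  have hx := rp_lt b x
  have hy := rp_lt b y
  have hn : 0 < n := Nat.pos_of_ne_zero (NeZero.ne n)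
  have key : y - x = (y - b) - (x - b) := by ring
  unfold relPos at *
  rw [key, sub_eq_add_neg, ZMod.val_add, ZMod.neg_val']
  rcases Nat.eq_zero_or_pos ((x - b).val) with h0 | hpos
  · rw [h0]
    simp only [Nat.sub_zero, Nat.mod_self, Nat.add_zero, Nat.zero_le, if_true]
    rw [Nat.mod_eq_of_lt hy]
  · rw [Nat.mod_eq_of_lt (by omega : n - (x-b).val < n)]
    rcases le_or_gt ((x-b).val) ((y-b).val) with hle | hlt
    · rw [if_pos hle]
      have : (y - b).val + (n - (x - b).val) = n + ((y-b).val - (x-b).val) := by omega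
      rw [this, Nat.add_mod_left, Nat.mod_eq_of_lt (by omega)]
    · rw [if_neg (by omega)]
      rw [Nat.mod_eq_of_lt (by omega)]
      omega

end RelPos


open Real


open Real


lemma sin_ineq {u v : ℝ} (hu : 0 < u) (hv : 0 < v) (huv : u + v < 2 * π) :
    0 < Real.sin u + Real.sin v - Real.sin (u + v) := by
  have p1 := Real.sin_sq_add_cos_sq (u/2)
  have p2 := Real.sin_sq_add_cos_sq (v/2)
  have h1 : Real.sin u = 2 * Real.sin (u/2) * Real.cos (u/2) := by
    rw [← Real.sin_two_mul]; ring_nf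
  have h2 : Real.sin v = 2 * Real.sin (v/2) * Real.cos (v/2) := by
    rw [← Real.sin_two_mul]; ring_nf
  have h3 : Real.sin (u + v) = 2 * Real.sin (u/2 + v/2) * Real.cos (u/2 + v/2) := by
    rw [← Real.sin_two_mul]; ring_nf
  have h4 := Real.sin_add (u/2) (v/2)
  have h5 := Real.cos_add (u/2) (v/2)
  have key : Real.sin u + Real.sin v - Real.sin (u + v)
      = 4 * Real.sin (u/2) * Real.sin (v/2) * Real.sin (u/2 + v/2) := by
    rw [h1, h2, h3, h4, h5]
    linear_combination (-2*Real.sin (u/2)*Real.cos (u/2))*p2 + (-2*Real.sin (v/2)*Real.cos (v/2))*p1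
  rw [key]
  have s1 : 0 < Real.sin (u/2) := Real.sin_pos_of_pos_of_lt_pi (by linarith) (by linarith [Real.pi_pos])
  have s2 : 0 < Real.sin (v/2) := Real.sin_pos_of_pos_of_lt_pi (by linarith) (by linarith [Real.pi_pos])
  have s3 : 0 < Real.sin (u/2 + v/2) := Real.sin_pos_of_pos_of_lt_pi (by linarith) (by linarith)
  positivity

section Vtx
variable {n : ℕ} [NeZero n]
set_option linter.unusedSectionVars false

lemma val_rel (a b : ZMod n) : b.val = (a.val + relPos n a b) % n := by
  have : a + (b - a) = b := by ring
  conv_lhs => rw [← this]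
  rw [ZMod.val_add]; rfl

lemma sin_theta_diff (a b : ZMod n) :
    Real.sin (2 * π * (b.val : ℝ) / n - 2 * π * (a.val : ℝ) / n)
      = Real.sin (2 * π * (relPos n a b : ℝ) / n) := by
  have hn : 0 < n := Nat.pos_of_ne_zero (NeZero.ne n)
  have hr := ZMod.val_lt (b - a)
  have ha := ZMod.val_lt a
  have hv := val_rel a b
  have hnR : (n : ℝ) ≠ 0 := Nat.cast_ne_zero.mpr (NeZero.ne n)
  rcases Nat.lt_or_ge (a.val + relPos n a b) n with h | h
  · have hb : b.val = a.val + relPos n a b := by rw [hv, Nat.mod_eq_of_lt h]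
    rw [hb]
    congr 1
    push_cast
    field_simp
    ring
  · have hr' : relPos n a b < n := hr
    have hb : b.val = a.val + relPos n a b - n := by
      have h2 : (a.val + relPos n a b) % n = (a.val + relPos n a b - n) % n := by
        conv_lhs => rw [show a.val + relPos n a b = n + (a.val + relPos n a b - n) from by omega]
        rw [Nat.add_mod_left]
      rw [hv, h2, Nat.mod_eq_of_lt (by omega)]
    have harg : 2 * π * (b.val : ℝ) / n - 2 * π * (a.val : ℝ) / n
        = 2 * π * (relPos n a b : ℝ) / n - 2 * π := by
      rw [hb]
      have : ((a.val + relPos n a b - n : ℕ) : ℝ) = (a.val : ℝ) + relPos n a b - n := by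
        push_cast [Nat.cast_sub h]; ring
      rw [this]
      field_simp
      ring
    rw [harg, Real.sin_sub_two_pi]

lemma cr_vtx_expand (a b c : ZMod n) :
    cr (vtx n a) (vtx n b) (vtx n c)
      = Real.sin (2 * π * (b.val : ℝ) / n - 2 * π * (a.val : ℝ) / n)
        + Real.sin (2 * π * (c.val : ℝ) / n - 2 * π * (b.val : ℝ) / n)
        - Real.sin (2 * π * (c.val : ℝ) / n - 2 * π * (a.val : ℝ) / n) := by
  rw [Real.sin_sub, Real.sin_sub, Real.sin_sub]
  unfold cr vtx
  ring

/-- Orientation: vertices in cyclic order `a, b, c` are positively oriented. -/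
lemma cr_pos {a b c : ZMod n} (h1 : 0 < relPos n a b) (h2 : relPos n a b < relPos n a c) :
    0 < cr (vtx n a) (vtx n b) (vtx n c) := by
  have hn : 0 < n := Nat.pos_of_ne_zero (NeZero.ne n)
  have hc := ZMod.val_lt (c - a)
  have hbc : relPos n b c = relPos n a c - relPos n a b := by
    have := rp_base (n := n) a b c
    rw [this, if_pos (le_of_lt h2)]
  rw [cr_vtx_expand, sin_theta_diff a b, sin_theta_diff b c, sin_theta_diff a c]
  have hz : relPos n a c = relPos n a b + relPos n b c := by omega
  have harg : 2 * π * (relPos n a c : ℝ) / n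
      = 2 * π * (relPos n a b : ℝ) / n + 2 * π * (relPos n b c : ℝ) / n := by
    rw [hz]; push_cast; field_simp
  rw [harg]
  have hπ := Real.pi_pos
  have hnR : (0:ℝ) < n := Nat.cast_pos.mpr hn
  apply sin_ineq
  · have : (0:ℝ) < (relPos n a b : ℝ) := Nat.cast_pos.mpr h1
    positivity
  · have : (0:ℝ) < (relPos n b c : ℝ) := Nat.cast_pos.mpr (by omega)
    positivity
  · rw [← harg]
    have hlt : (relPos n a c : ℝ) < n := Nat.cast_lt.mpr (by unfold relPos at *; omega)
    rw [div_lt_iff₀ hnR] at *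
    · nlinarith
end Vtx
end EarAux

namespace EarAux

lemma cr_affine (C D A B : ℝ × ℝ) (t : ℝ) :
    cr C D (segPt A B t) = (1 - t) * cr C D A + t * cr C D B := by
  unfold cr segPt; ring

section Geom
variable {n : ℕ} [NeZero n]
set_option linter.unusedSectionVars false

lemma rp_self (a : ZMod n) : relPos n a a = 0 := by simp [relPos]

lemma rp_pos {a b : ZMod n} (h : a ≠ b) : 0 < relPos n a b :=
  Nat.pos_of_ne_zero (fun h0 => h (rp_eq_zero_iff.mp h0).symm)

lemma rp_ne {a b c : ZMod n} (h : b ≠ c) : relPos n a b ≠ relPos n a c :=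
  fun he => h (rp_inj he)

/-- omega-friendly version of `rp_base`. -/
lemma rp_base' (b x y : ZMod n) :
    (relPos n b x ≤ relPos n b y ∧ relPos n x y = relPos n b y - relPos n b x) ∨
    (relPos n b y < relPos n b x ∧ relPos n x y = relPos n b y + n - relPos n b x) := by
  rw [rp_base b x y]
  split_ifs with h
  · exact Or.inl ⟨h, rfl⟩
  · exact Or.inr ⟨by omega, rfl⟩

lemma cr_neg {a b c : ZMod n} (h1 : 0 < relPos n a c) (h2 : relPos n a c < relPos n a b) :
    cr (vtx n a) (vtx n b) (vtx n c) < 0 := by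
  have := cr_pos h1 h2
  rw [cr_swap]
  linarith

lemma cr_ne_zero {a b c : ZMod n} (hab : a ≠ b) (hac : a ≠ c) (hbc : b ≠ c) :
    cr (vtx n a) (vtx n b) (vtx n c) ≠ 0 := by
  have h1 : 0 < relPos n a b := rp_pos hab
  have h2 : 0 < relPos n a c := rp_pos hac
  have h3 : relPos n a b ≠ relPos n a c := rp_ne hbc
  rcases Nat.lt_or_ge (relPos n a b) (relPos n a c) with h | h
  · exact ne_of_gt (cr_pos h1 h)
  · exact ne_of_lt (cr_neg h2 (by omega))

lemma vtx_inj (hn : 3 ≤ n) {a b : ZMod n} (hab : a ≠ b) : vtx n a ≠ vtx n b := by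
  intro h
  have h1 : relPos n a (a + 1) = 1 := by
    have e : (a + 1 - a) = ((1 : ℕ) : ZMod n) := by push_cast; ring
    rw [relPos, e, ZMod.val_natCast]
    exact Nat.mod_eq_of_lt (by omega)
  have h2 : relPos n a (a + 2) = 2 := by
    have e : (a + 2 - a) = ((2 : ℕ) : ZMod n) := by push_cast; ring
    rw [relPos, e, ZMod.val_natCast]
    exact Nat.mod_eq_of_lt (by omega)
  have ha1 : a ≠ a + 1 := fun he => by
    have := rp_self (n := n) a
    rw [← he] at h1; omega
  have ha2 : a ≠ a + 2 := fun he => by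
    have := rp_self (n := n) a
    rw [← he] at h2; omega
  have h12 : a + 1 ≠ a + 2 := fun he => by rw [he] at h1; omega
  rcases eq_or_ne b (a + 1) with hb | hb
  · have hcr := cr_ne_zero (c := a + 2) hab ha2 (by rw [hb]; exact h12)
    rw [h] at hcr
    exact hcr (cr_self _ _)
  · have hcr := cr_ne_zero (c := a + 1) hab ha1 hb
    rw [h] at hcr
    exact hcr (cr_self _ _)

lemma segPt_symm (A B : ℝ × ℝ) (t : ℝ) : segPt A B t = segPt B A (1 - t) := by
  simp only [segPt, Prod.mk.injEq]
  constructor <;> ring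

lemma crossesAt_symm {a b c d : ZMod n} {t : ℝ} (h : CrossesAt n a b c d t) :
    CrossesAt n a b d c t := by
  obtain ⟨t0, t1, s, s0, s1, heq⟩ := h
  exact ⟨t0, t1, 1 - s, by linarith, by linarith, by rw [heq, segPt_symm]⟩

/-- Existence of the crossing point for combinatorially crossing chords. -/
lemma cross_exists {a b c d : ZMod n}
    (h1 : 0 < relPos n a c) (h2 : relPos n a c < relPos n a b)
    (h3 : relPos n a b < relPos n a d) :
    ∃ t, CrossesAt n a b c d t := by
  have hda := rp_lt a d
  have e1 := rp_base' (n := n) a c d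
  have e2 := rp_base' (n := n) a c a
  have e3 := rp_base' (n := n) a c b
  have hself := rp_self (n := n) a
  set A := vtx n a
  set B := vtx n b
  set C := vtx n c
  set D := vtx n d
  have LA : 0 < cr C D A := cr_pos (by omega) (by omega)
  have LB : cr C D B < 0 := cr_neg (by omega) (by omega)
  have MC : cr A B C < 0 := cr_neg h1 h2
  have MD : 0 < cr A B D := cr_pos (by omega) h3
  set t := cr C D A / (cr C D A - cr C D B) with ht
  have ht0 : 0 < t := by apply div_pos LA; linarith
  have ht1 : t < 1 := by rw [div_lt_one (by linarith)]; linarith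
  have hPzero : cr C D (segPt A B t) = 0 := by
    have hne : cr C D A - cr C D B ≠ 0 := by linarith
    rw [cr_affine, ht]
    field_simp
    ring
  have hCD : C ≠ D := by
    intro h
    rw [h, cr_self] at LA
    exact lt_irrefl _ LA
  set P := segPt A B t with hP
  set dx := D.1 - C.1 with hdx
  set dy := D.2 - C.2 with hdy
  have hne : dx ≠ 0 ∨ dy ≠ 0 := by
    by_contra hc
    push_neg at hc
    exact hCD (Prod.ext (by rw [hdx] at hc; linarith [hc.1]) (by rw [hdy] at hc; linarith [hc.2])).symm
  have hden : 0 < dx ^ 2 + dy ^ 2 := by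
    rcases hne with h | h
    · nlinarith [mul_self_pos.mpr h, sq_nonneg dy]
    · nlinarith [mul_self_pos.mpr h, sq_nonneg dx]
  set s := ((P.1 - C.1) * dx + (P.2 - C.2) * dy) / (dx ^ 2 + dy ^ 2) with hs
  have hcrP : dx * (P.2 - C.2) - dy * (P.1 - C.1) = 0 := hPzero
  have heq : segPt A B t = segPt C D s := by
    rw [← hP]
    have hx : (1 - s) * C.1 + s * D.1 = P.1 := by
      have hsx : s * dx = P.1 - C.1 := by
        rw [hs]
        field_simp
        linear_combination dy * hcrP
      rw [hdx] at hsx; linarith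
    have hy : (1 - s) * C.2 + s * D.2 = P.2 := by
      have hsy : s * dy = P.2 - C.2 := by
        rw [hs]
        field_simp
        linear_combination (-dx) * hcrP
      rw [hdy] at hsy; linarith
    exact (Prod.ext hx hy).symm
  have hMP : cr A B P = 0 := by
    rw [hP, cr_affine, cr_self', cr_self'']; ring
  have hsum : (1 - s) * cr A B C + s * cr A B D = 0 := by
    have h' : cr A B (segPt C D s) = 0 := by rw [← heq]; exact hMP
    rw [cr_affine] at h'
    linarith
  have hs0 : 0 < s := by
    by_contra hc
    push_neg at hc
    nlinarith [mul_pos (show (0:ℝ) < 1 - s by linarith) (show (0:ℝ) < -(cr A B C) by linarith),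
      mul_nonneg (neg_nonneg.mpr hc) (le_of_lt MD)]
  have hs1 : s < 1 := by
    by_contra hc
    push_neg at hc
    nlinarith [mul_nonneg (show (0:ℝ) ≤ s - 1 by linarith) (show (0:ℝ) ≤ -(cr A B C) by linarith),
      mul_pos (show (0:ℝ) < s by linarith) MD]
  exact ⟨t, ht0, ht1, s, hs0, hs1, heq⟩

/-- Geometric crossing implies combinatorial crossing, except in the degenerate
case where the two chords coincide. -/
lemma cross_classify (hn : 3 ≤ n) {a b c d : ZMod n} {t : ℝ}
    (hab : a ≠ b) (hcd : c ≠ d) (h : CrossesAt n a b c d t) :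
    Crosses n a b c d ∨ s(c, d) = s(a, b) := by
  obtain ⟨ht0, ht1, s, hs0, hs1, heq⟩ := h
  have hMP : cr (vtx n a) (vtx n b) (segPt (vtx n a) (vtx n b) t) = 0 := by
    rw [cr_affine, cr_self', cr_self'']; ring
  have hsum : (1 - s) * cr (vtx n a) (vtx n b) (vtx n c)
      + s * cr (vtx n a) (vtx n b) (vtx n d) = 0 := by
    rw [heq, cr_affine] at hMP
    linarith
  by_cases hca : c = a
  · have hC0 : cr (vtx n a) (vtx n b) (vtx n c) = 0 := by rw [hca]; exact cr_self' _ _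
    have hD0 : cr (vtx n a) (vtx n b) (vtx n d) = 0 := by
      rw [hC0] at hsum
      rcases mul_eq_zero.mp (show s * cr (vtx n a) (vtx n b) (vtx n d) = 0 by linarith)
        with h' | h'
      · linarith
      · exact h'
    have hdb : d = b := by
      by_contra hdb
      exact cr_ne_zero hab (fun he => hcd (hca.trans he)) (fun he => hdb he.symm) hD0
    right; rw [hdb, hca]
  · by_cases hcb : c = b
    · have hC0 : cr (vtx n a) (vtx n b) (vtx n c) = 0 := by rw [hcb]; exact cr_self'' _ _
      have hD0 : cr (vtx n a) (vtx n b) (vtx n d) = 0 := by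
        rw [hC0] at hsum
        rcases mul_eq_zero.mp (show s * cr (vtx n a) (vtx n b) (vtx n d) = 0 by linarith)
          with h' | h'
        · linarith
        · exact h'
      have hda : d = a := by
        by_contra hda
        exact cr_ne_zero hab (fun he => hda he.symm) (fun he => hcd (hcb.trans he)) hD0
      right; rw [hda, hcb]; exact Sym2.eq_swap
    · by_cases hda : d = a
      · have hD0 : cr (vtx n a) (vtx n b) (vtx n d) = 0 := by rw [hda]; exact cr_self' _ _
        have hC0 : cr (vtx n a) (vtx n b) (vtx n c) = 0 := by
          rw [hD0] at hsum
          rcases mul_eq_zero.mp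
            (show (1 - s) * cr (vtx n a) (vtx n b) (vtx n c) = 0 by linarith) with h' | h'
          · linarith
          · exact h'
        exact absurd hC0 (cr_ne_zero hab (fun he => hca he.symm) (fun he => hcb he.symm))
      · by_cases hdb : d = b
        · have hD0 : cr (vtx n a) (vtx n b) (vtx n d) = 0 := by rw [hdb]; exact cr_self'' _ _
          have hC0 : cr (vtx n a) (vtx n b) (vtx n c) = 0 := by
            rw [hD0] at hsum
            rcases mul_eq_zero.mp
              (show (1 - s) * cr (vtx n a) (vtx n b) (vtx n c) = 0 by linarith) with h' | h'
            · linarith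
            · exact h'
          exact absurd hC0 (cr_ne_zero hab (fun he => hca he.symm) (fun he => hcb he.symm))
        · -- proper case: none of c, d equals a or b
          left
          have hC : cr (vtx n a) (vtx n b) (vtx n c) ≠ 0 :=
            cr_ne_zero hab (fun he => hca he.symm) (fun he => hcb he.symm)
          have hD : cr (vtx n a) (vtx n b) (vtx n d) ≠ 0 :=
            cr_ne_zero hab (fun he => hda he.symm) (fun he => hdb he.symm)
          have hac := rp_pos (n := n) (fun he => hca he.symm)
          have had := rp_pos (n := n) (fun he => hda he.symm)
          have habr := rp_pos (n := n) hab
          have hbc := rp_ne (n := n) (a := a) (fun he : b = c => hcb he.symm)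
          have hbd := rp_ne (n := n) (a := a) (fun he : b = d => hdb he.symm)
          have hcdr := rp_ne (n := n) (a := a) hcd
          rcases lt_trichotomy (cr (vtx n a) (vtx n b) (vtx n c)) 0 with hC1 | hC1 | hC1
          · have hD1 : 0 < cr (vtx n a) (vtx n b) (vtx n d) := by
              rcases lt_trichotomy (cr (vtx n a) (vtx n b) (vtx n d)) 0 with h' | h' | h'
              · exfalso; nlinarith
              · exact absurd h' hD
              · exact h'
            left
            refine ⟨hac, ?_, ?_⟩
            · by_contra hcon
              have h' : relPos n a b < relPos n a c := by omega
              have := cr_pos habr h'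
              linarith
            · by_contra hcon
              have h' : relPos n a d < relPos n a b := by omega
              have := cr_neg (n := n) had h'
              linarith
          · exact absurd hC1 hC
          · have hD1 : cr (vtx n a) (vtx n b) (vtx n d) < 0 := by
              rcases lt_trichotomy (cr (vtx n a) (vtx n b) (vtx n d)) 0 with h' | h' | h'
              · exact h'
              · exact absurd h' hD
              · exfalso; nlinarith
            right
            refine ⟨had, ?_, ?_⟩
            · by_contra hcon
              have h' : relPos n a b < relPos n a d := by omega
              have := cr_pos habr h'
              linarith
            · by_contra hcon
              have h' : relPos n a c < relPos n a b := by omega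
              have := cr_neg (n := n) hac h'
              linarith

/-- Ordering of crossing points along the chord from `a` to `b` for nested chords. -/
lemma cross_order {a b c d c' d' : ZMod n} {t t' : ℝ}
    (h0 : 0 < relPos n a c) (h1 : relPos n a c ≤ relPos n a c')
    (h2 : relPos n a c' < relPos n a b) (h3 : relPos n a b < relPos n a d')
    (h4 : relPos n a d' ≤ relPos n a d)
    (hst : relPos n a c < relPos n a c' ∨ relPos n a d' < relPos n a d)
    (hcd : CrossesAt n a b c d t) (hcd' : CrossesAt n a b c' d' t') :
    t < t' := by
  obtain ⟨ht0, ht1, s, hs0, hs1, heq⟩ := hcd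
  obtain ⟨ht0', ht1', s', hs0', hs1', heq'⟩ := hcd'
  have hdb := rp_lt a d
  have hself := rp_self (n := n) a
  have e1 := rp_base' (n := n) a c' d'
  have e2 := rp_base' (n := n) a c' a
  have e3 := rp_base' (n := n) a c' b
  have e4 := rp_base' (n := n) a c' c
  have e5 := rp_base' (n := n) a c' d
  have LA : 0 < cr (vtx n c') (vtx n d') (vtx n a) := cr_pos (by omega) (by omega)
  have LB : cr (vtx n c') (vtx n d') (vtx n b) < 0 := cr_neg (by omega) (by omega)
  have LC : 0 ≤ cr (vtx n c') (vtx n d') (vtx n c) := by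
    rcases eq_or_ne (relPos n a c) (relPos n a c') with he | he
    · have hcc : c = c' := rp_inj he
      rw [hcc]
      rw [cr_self']
    · have hlt : relPos n a c < relPos n a c' := by omega
      exact le_of_lt (cr_pos (by omega) (by omega))
  have LD : 0 ≤ cr (vtx n c') (vtx n d') (vtx n d) := by
    rcases eq_or_ne (relPos n a d) (relPos n a d') with he | he
    · have hdd : d = d' := rp_inj he
      rw [hdd]
      rw [cr_self'']
    · have hlt : relPos n a d' < relPos n a d := by omega
      exact le_of_lt (cr_pos (by omega) (by omega))
  have Lst : 0 < (1 - s) * cr (vtx n c') (vtx n d') (vtx n c)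
      + s * cr (vtx n c') (vtx n d') (vtx n d) := by
    rcases hst with h | h
    · have LC' : 0 < cr (vtx n c') (vtx n d') (vtx n c) := cr_pos (by omega) (by omega)
      nlinarith
    · have LD' : 0 < cr (vtx n c') (vtx n d') (vtx n d) := cr_pos (by omega) (by omega)
      nlinarith
  have hP : (1 - t) * cr (vtx n c') (vtx n d') (vtx n a)
      + t * cr (vtx n c') (vtx n d') (vtx n b)
      = (1 - s) * cr (vtx n c') (vtx n d') (vtx n c)
      + s * cr (vtx n c') (vtx n d') (vtx n d) := by
    rw [← cr_affine, ← cr_affine, ← heq]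
  have hP' : (1 - t') * cr (vtx n c') (vtx n d') (vtx n a)
      + t' * cr (vtx n c') (vtx n d') (vtx n b) = 0 := by
    rw [← cr_affine, heq', cr_affine, cr_self', cr_self'']; ring
  by_contra hcon
  push_neg at hcon
  nlinarith [mul_nonneg (sub_nonneg.mpr hcon)
    (show (0:ℝ) ≤ cr (vtx n c') (vtx n d') (vtx n a) - cr (vtx n c') (vtx n d') (vtx n b)
      by linarith)]

end Geom
end EarAux

namespace EarAux
section Main
variable {n : ℕ} [NeZero n]
set_option linter.unusedVariables false
set_option linter.unusedSectionVars false
set_option maxHeartbeats 2000000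

/-- endpoints of chords of `D` lie in `V₂`. -/
lemma Dends {ζ η : ZMod n} {D D₂ : Set (Sym2 (ZMod n))}
    (hsplit : D = insert s(ζ, η) D₂)
    (hD₂ : IsDissectionOf n {ε : ZMod n | relPos n η ε ≤ relPos n η ζ} D₂)
    {c d : ZMod n} (h : s(c, d) ∈ D) :
    relPos n η c ≤ relPos n η ζ ∧ relPos n η d ≤ relPos n η ζ := by
  rw [hsplit, Set.mem_insert_iff] at h
  rcases h with h | h
  · have hself := rp_self (n := n) η
    rcases Sym2.eq_iff.mp h with ⟨rfl, rfl⟩ | ⟨rfl, rfl⟩ <;> omega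
  · have h' := hD₂.1 c d h
    exact ⟨h'.1, h'.2.1⟩

lemma alpha_bound {ζ η α β : ZMod n}
    (hβ1 : 0 < relPos n η β) (hβ2 : relPos n η β < relPos n η ζ)
    (hα1 : 0 < relPos n ζ α) (hα2 : relPos n ζ α < relPos n ζ η) :
    relPos n η ζ < relPos n η α := by
  have e1 := rp_base' (n := n) η ζ α
  have e2 := rp_base' (n := n) η ζ η
  have hself := rp_self (n := n) η
  have h1 := rp_lt η α
  have h2 := rp_lt η ζ
  omega

/-- order two crossing parameters along the chord `α β`, where the chords are
given by the positions of their endpoints relative to `η`. -/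
lemma order_alpha {η α β c d c' d' : ZMod n} {t t' : ℝ}
    (h1 : relPos n η c ≤ relPos n η c') (h2 : relPos n η c' < relPos n η β)
    (h3 : relPos n η β < relPos n η d') (h4 : relPos n η d' ≤ relPos n η d)
    (h5 : relPos n η d < relPos n η α)
    (hst : relPos n η c < relPos n η c' ∨ relPos n η d' < relPos n η d)
    (hcd : CrossesAt n α β c d t) (hcd' : CrossesAt n α β c' d' t') : t < t' := by
  have g1 := rp_base' (n := n) η α c
  have g2 := rp_base' (n := n) η α c'
  have g3 := rp_base' (n := n) η α d
  have g4 := rp_base' (n := n) η α d'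
  have g5 := rp_base' (n := n) η α β
  have b1 := rp_lt η α
  have b2 := rp_lt η c
  have b3 := rp_lt η d
  refine cross_order ?_ ?_ ?_ ?_ ?_ ?_ hcd hcd'
  · omega
  · omega
  · omega
  · omega
  · omega
  · omega

/-- The forward direction: chopping off the first two vertices of a T-path
`(α, ζ, η, …)` yields a T-path from `η` to `β`. -/
lemma tpath_forward (hn : 3 ≤ n) {ζ η α β : ZMod n} {D D₂ : Set (Sym2 (ZMod n))}
    (hD : IsDissection n D) (hsplit : D = insert s(ζ, η) D₂) (hdm : s(ζ, η) ∉ D₂)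
    (hD₂ : IsDissectionOf n {ε : ZMod n | relPos n η ε ≤ relPos n η ζ} D₂)
    (hβ1 : 0 < relPos n η β) (hβ2 : relPos n η β < relPos n η ζ)
    (hα' : relPos n η ζ < relPos n η α)
    (ρ : List (ZMod n))
    (ht : IsTPath n D α β (α :: ζ :: η :: ρ)) :
    IsTPath n D η β (η :: ρ) ∧ (η :: ρ).getD 1 0 ≠ ζ := by
  classical
  obtain ⟨hlen, h0, hlast, hW, hcons, hdiff, hnc, hodd, tf, hto, hmono⟩ := ht
  set l := α :: ζ :: η :: ρ with hldef
  have hml : l.length = ρ.length + 3 := rfl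
  have hlc : (η :: ρ).length = ρ.length + 1 := rfl
  have hsh : ∀ i : ℕ, l.getD (i + 2) 0 = (η :: ρ).getD i 0 := fun i => rfl
  have hl1 : l.getD 1 0 = ζ := rfl
  have hl2 : l.getD 2 0 = η := rfl
  have hself := rp_self (n := n) η
  have hζα := rp_lt η α
  have hζζ := rp_lt η ζ
  have hζβ := rp_lt η β
  -- ρ is nonempty
  have hρne : ρ ≠ [] := by
    intro he
    have h3 : l.length = 3 := by rw [hldef, he]; rfl
    rw [h3, show (3:ℕ) - 1 = 2 from rfl, hl2] at hlast
    rw [← hlast] at hβ1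
    omega
  have hρpos : 0 < ρ.length := List.length_pos_iff.mpr hρne
  have hm4 : 4 ≤ l.length := by omega
  have hαβ : α ≠ β := by
    intro he
    rw [he] at hα'
    omega
  -- the main induction: characterization of the odd steps at positions ≥ 3
  have claim : ∀ i, 3 ≤ i → Odd i → i + 1 < l.length →
      s(l.getD i 0, l.getD (i+1) 0) ∈ D₂ ∧
      ((0 < relPos n η (l.getD i 0) ∧ relPos n η (l.getD i 0) < relPos n η β ∧
        relPos n η β < relPos n η (l.getD (i+1) 0) ∧
        relPos n η (l.getD (i+1) 0) ≤ relPos n η ζ) ∨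
       (0 < relPos n η (l.getD (i+1) 0) ∧ relPos n η (l.getD (i+1) 0) < relPos n η β ∧
        relPos n η β < relPos n η (l.getD i 0) ∧
        relPos n η (l.getD i 0) ≤ relPos n η ζ)) := by
    intro i
    induction i using Nat.strong_induction_on with
    | _ i IH =>
    intro h3 hoddi hi1
    have heD : s(l.getD i 0, l.getD (i+1) 0) ∈ D := hodd i hoddi hi1
    have hne1 : s(l.getD 1 0, l.getD 2 0) ≠ s(l.getD i 0, l.getD (i+1) 0) :=
      hdiff 1 i (by omega) hi1
    rw [hl1, hl2] at hne1
    have heD₂ : s(l.getD i 0, l.getD (i+1) 0) ∈ D₂ := by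
      have := heD
      rw [hsplit, Set.mem_insert_iff] at this
      rcases this with h | h
      · exact absurd h.symm hne1
      · exact h
    have hends := hD₂.1 _ _ heD₂
    have hPc : relPos n η (l.getD i 0) ≤ relPos n η ζ := hends.1
    have hPd : relPos n η (l.getD (i+1) 0) ≤ relPos n η ζ := hends.2.1
    have hconsi : l.getD i 0 ≠ l.getD (i+1) 0 := hcons i hi1
    have hcrA : CrossesAt n α β (l.getD i 0) (l.getD (i+1) 0) (tf i) := hto i hoddi hi1
    have hcross : Crosses n α β (l.getD i 0) (l.getD (i+1) 0) := by
      rcases cross_classify hn hαβ hconsi hcrA with h | h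
      · exact h
      · exfalso
        rcases Sym2.eq_iff.mp h with ⟨h1', h2'⟩ | ⟨h1', h2'⟩
        · rw [h1'] at hPc; omega
        · rw [h2'] at hPd; omega
    have eα1 := rp_base' (n := n) η α (l.getD i 0)
    have eα2 := rp_base' (n := n) η α (l.getD (i+1) 0)
    have eα3 := rp_base' (n := n) η α β
    unfold Crosses CyclicallyOrdered at hcross
    have hweak : (relPos n η (l.getD i 0) < relPos n η β ∧
        relPos n η β < relPos n η (l.getD (i+1) 0)) ∨
        (relPos n η (l.getD (i+1) 0) < relPos n η β ∧
        relPos n η β < relPos n η (l.getD i 0)) := by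
      omega
    -- now show that neither endpoint is η
    have hnoeta : relPos n η (l.getD i 0) ≠ 0 ∧ relPos n η (l.getD (i+1) 0) ≠ 0 := by
      -- one direction is automatic; suppose the other endpoint is η
      have hbad : ¬ (l.getD i 0 = η ∨ l.getD (i+1) 0 = η) := by
        intro hi0
        rcases Nat.lt_or_ge i 5 with hi5 | hi5
        · -- i = 3
          have hieq : i = 3 := by
            rcases hoddi with ⟨k, hk⟩; omega
          subst hieq
          rcases hi0 with h | h
          · exact hcons 2 (by omega) (hl2.trans h.symm)
          · have hd := hdiff 2 3 (by omega) hi1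
            rw [hl2, h] at hd
            exact hd Sym2.eq_swap
        · -- i ≥ 5
          obtain ⟨j, hj⟩ : ∃ j, j + 2 = i := ⟨i - 2, by omega⟩
          have hoddj : Odd j := by rcases hoddi with ⟨k, hk⟩; exact ⟨k - 1, by omega⟩
          obtain ⟨hjD₂, hjchar⟩ := IH j (by omega) (by omega) hoddj (by omega)
          have hjD : s(l.getD j 0, l.getD (j+1) 0) ∈ D := by
            rw [hsplit]; exact Set.mem_insert_iff.mpr (Or.inr hjD₂)
          have hnc2 := hD.2 _ _ _ _ heD hjD
          have hmon := hmono j i hoddj hoddi (by omega) hi1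
          have hcrAj : CrossesAt n α β (l.getD j 0) (l.getD (j+1) 0) (tf j) :=
            hto j hoddj (by omega)
          have f1 := rp_base' (n := n) η (l.getD i 0) (l.getD j 0)
          have f2 := rp_base' (n := n) η (l.getD i 0) (l.getD (i+1) 0)
          have f3 := rp_base' (n := n) η (l.getD i 0) (l.getD (j+1) 0)
          have bl1 := rp_lt η (l.getD j 0)
          have bl2 := rp_lt η (l.getD (j+1) 0)
          have bl3 := rp_lt η (l.getD i 0)
          have bl4 := rp_lt η (l.getD (i+1) 0)
          unfold Crosses CyclicallyOrdered at hnc2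
          rcases hi0 with h | h
          · have hP0 : relPos n η (l.getD i 0) = 0 := by rw [h, rp_self]
            rcases hjchar with hj' | hj'
            · have := order_alpha (n := n) (η := η) (α := α) (β := β)
                (c := l.getD i 0) (d := l.getD (i+1) 0)
                (c' := l.getD j 0) (d' := l.getD (j+1) 0)
                (by omega) (by omega) (by omega) (by omega) (by omega) (by omega)
                hcrA hcrAj
              linarith
            · have := order_alpha (n := n) (η := η) (α := α) (β := β)
                (c := l.getD i 0) (d := l.getD (i+1) 0)
                (c' := l.getD (j+1) 0) (d' := l.getD j 0)
                (by omega) (by omega) (by omega) (by omega) (by omega) (by omega)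
                hcrA (crossesAt_symm hcrAj)
              linarith
          · have hP0 : relPos n η (l.getD (i+1) 0) = 0 := by rw [h, rp_self]
            rcases hjchar with hj' | hj'
            · have := order_alpha (n := n) (η := η) (α := α) (β := β)
                (c := l.getD (i+1) 0) (d := l.getD i 0)
                (c' := l.getD j 0) (d' := l.getD (j+1) 0)
                (by omega) (by omega) (by omega) (by omega) (by omega) (by omega)
                (crossesAt_symm hcrA) hcrAj
              linarith
            · have := order_alpha (n := n) (η := η) (α := α) (β := β)
                (c := l.getD (i+1) 0) (d := l.getD i 0)
                (c' := l.getD (j+1) 0) (d' := l.getD j 0)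
                (by omega) (by omega) (by omega) (by omega) (by omega) (by omega)
                (crossesAt_symm hcrA) (crossesAt_symm hcrAj)
              linarith
      push_neg at hbad
      constructor
      · intro h0'
        exact hbad.1 (rp_eq_zero_iff.mp h0')
      · intro h0'
        exact hbad.2 (rp_eq_zero_iff.mp h0')
    exact ⟨heD₂, by omega⟩
  -- convert the characterization to the shifted path
  have hkey : ∀ i, Odd i → i + 1 < (η :: ρ).length →
      ((0 < relPos n η ((η :: ρ).getD i 0) ∧
        relPos n η ((η :: ρ).getD i 0) < relPos n η β ∧
        relPos n η β < relPos n η ((η :: ρ).getD (i+1) 0) ∧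
        relPos n η ((η :: ρ).getD (i+1) 0) ≤ relPos n η ζ) ∨
       (0 < relPos n η ((η :: ρ).getD (i+1) 0) ∧
        relPos n η ((η :: ρ).getD (i+1) 0) < relPos n η β ∧
        relPos n η β < relPos n η ((η :: ρ).getD i 0) ∧
        relPos n η ((η :: ρ).getD i 0) ≤ relPos n η ζ)) := by
    intro i hoi hi
    have hipos : 1 ≤ i := hoi.pos
    have hoi2 : Odd (i+2) := by rcases hoi with ⟨k, hk⟩; exact ⟨k+1, by omega⟩
    have hi2 : (i+2) + 1 < l.length := by omega
    have hchar := (claim (i+2) (by omega) hoi2 hi2).2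
    rw [show i+2+1 = (i+1)+2 from by omega, hsh i, hsh (i+1)] at hchar
    exact hchar
  have hmemD : ∀ i, Odd i → i + 1 < (η :: ρ).length →
      s((η :: ρ).getD i 0, (η :: ρ).getD (i+1) 0) ∈ D := by
    intro i hoi hi
    have hipos : 1 ≤ i := hoi.pos
    have hoi2 : Odd (i+2) := by rcases hoi with ⟨k, hk⟩; exact ⟨k+1, by omega⟩
    have hi2 : (i+2) + 1 < l.length := by omega
    have h' := (claim (i+2) (by omega) hoi2 hi2).1
    rw [show i+2+1 = (i+1)+2 from by omega, hsh i, hsh (i+1)] at h'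
    rw [hsplit]
    exact Set.mem_insert_iff.mpr (Or.inr h')
  have hex : ∀ i, Odd i → i + 1 < (η :: ρ).length →
      ∃ u, CrossesAt n η β ((η :: ρ).getD i 0) ((η :: ρ).getD (i+1) 0) u := by
    intro i hoi hi
    rcases hkey i hoi hi with hc | hc
    · obtain ⟨u, hu⟩ := cross_exists hc.1 hc.2.1 hc.2.2.1
      exact ⟨u, hu⟩
    · obtain ⟨u, hu⟩ := cross_exists hc.1 hc.2.1 hc.2.2.1
      exact ⟨u, crossesAt_symm hu⟩
  constructor
  · refine ⟨?_, rfl, ?_, fun i _ => Set.mem_univ _, ?_, ?_, ?_, ?_, ?_⟩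
    · omega
    · have hlen' : (η :: ρ).length - 1 + 2 = l.length - 1 := by
        simp only [List.length_cons]; omega
      rw [← hsh ((η :: ρ).length - 1), hlen', hlast]
    · intro i hi
      have hi' : (i + 2) + 1 < l.length := by omega
      have h' := hcons (i+2) hi'
      rw [show i+2+1 = (i+1)+2 from by omega, hsh i, hsh (i+1)] at h'
      exact h'
    · intro i j hij hj
      have hj' : (j + 2) + 1 < l.length := by omega
      have h' := hdiff (i+2) (j+2) (by omega) hj'
      rw [show i+2+1 = (i+1)+2 from by omega, show j+2+1 = (j+1)+2 from by omega,
        hsh i, hsh (i+1), hsh j, hsh (j+1)] at h'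
      exact h'
    · intro i hi c d hcd
      have hi' : (i + 2) + 1 < l.length := by omega
      have h' := hnc (i+2) hi' c d hcd
      rw [show i+2+1 = (i+1)+2 from by omega, hsh i, hsh (i+1)] at h'
      exact h'
    · intro i hoi hi
      exact hmemD i hoi hi
    · refine ⟨fun i => if h : ∃ u, CrossesAt n η β ((η :: ρ).getD i 0)
          ((η :: ρ).getD (i+1) 0) u then h.choose else 0, ?_, ?_⟩
      · intro i hoi hi
        beta_reduce
        rw [dif_pos (hex i hoi hi)]
        exact (hex i hoi hi).choose_spec
      · intro i j hoi hoj hij hj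
        have hi : i + 1 < (η :: ρ).length := by omega
        beta_reduce
        rw [dif_pos (hex i hoi hi), dif_pos (hex j hoj hj)]
        have hui := (hex i hoi hi).choose_spec
        have huj := (hex j hoj hj).choose_spec
        have hoi2 : Odd (i+2) := by rcases hoi with ⟨k, hk⟩; exact ⟨k+1, by omega⟩
        have hoj2 : Odd (j+2) := by rcases hoj with ⟨k, hk⟩; exact ⟨k+1, by omega⟩
        have hi2 : (i+2) + 1 < l.length := by omega
        have hj2 : (j+2) + 1 < l.length := by omega
        -- the two chords, their data
        have hchi := hkey i hoi hi
        have hchj := hkey j hoj hj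
        have hDi := hmemD i hoi hi
        have hDj := hmemD j hoj hj
        have hnc2 := hD.2 _ _ _ _ hDi hDj
        have hdf : s((η :: ρ).getD i 0, (η :: ρ).getD (i+1) 0) ≠
            s((η :: ρ).getD j 0, (η :: ρ).getD (j+1) 0) := by
          have h' := hdiff (i+2) (j+2) (by omega) hj2
          rw [show i+2+1 = (i+1)+2 from by omega, show j+2+1 = (j+1)+2 from by omega,
            hsh i, hsh (i+1), hsh j, hsh (j+1)] at h'
          exact h'
        have hcrAi : CrossesAt n α β ((η :: ρ).getD i 0) ((η :: ρ).getD (i+1) 0)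
            (tf (i+2)) := by
          have h' := hto (i+2) hoi2 hi2
          rw [show i+2+1 = (i+1)+2 from by omega, hsh i, hsh (i+1)] at h'
          exact h'
        have hcrAj : CrossesAt n α β ((η :: ρ).getD j 0) ((η :: ρ).getD (j+1) 0)
            (tf (j+2)) := by
          have h' := hto (j+2) hoj2 hj2
          rw [show j+2+1 = (j+1)+2 from by omega, hsh j, hsh (j+1)] at h'
          exact h'
        have hmon := hmono (i+2) (j+2) hoi2 hoj2 (by omega) hj2
        have f1 := rp_base' (n := n) η ((η :: ρ).getD i 0) ((η :: ρ).getD (i+1) 0)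
        have f2 := rp_base' (n := n) η ((η :: ρ).getD i 0) ((η :: ρ).getD j 0)
        have f3 := rp_base' (n := n) η ((η :: ρ).getD i 0) ((η :: ρ).getD (j+1) 0)
        have b1 := rp_lt η ((η :: ρ).getD i 0)
        have b2 := rp_lt η ((η :: ρ).getD (i+1) 0)
        have b3 := rp_lt η ((η :: ρ).getD j 0)
        have b4 := rp_lt η ((η :: ρ).getD (j+1) 0)
        unfold Crosses CyclicallyOrdered at hnc2
        rcases hchi with hA | hA <;> rcases hchj with hB | hB
        · -- i: (c,d) straight; j: (c,d) straight
          have hnb : ¬(relPos n η ((η :: ρ).getD i 0) = relPos n η ((η :: ρ).getD j 0) ∧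
              relPos n η ((η :: ρ).getD (i+1) 0) = relPos n η ((η :: ρ).getD (j+1) 0)) := by
            rintro ⟨u1, u2⟩
            exact hdf (by rw [rp_inj u1, rp_inj u2])
          have htri : (relPos n η ((η :: ρ).getD i 0) ≤ relPos n η ((η :: ρ).getD j 0) ∧
              relPos n η ((η :: ρ).getD (j+1) 0) ≤ relPos n η ((η :: ρ).getD (i+1) 0)) ∨
              (relPos n η ((η :: ρ).getD j 0) ≤ relPos n η ((η :: ρ).getD i 0) ∧
              relPos n η ((η :: ρ).getD (i+1) 0) ≤ relPos n η ((η :: ρ).getD (j+1) 0)) := by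
            omega
          rcases htri with ⟨u1, u2⟩ | ⟨u1, u2⟩
          · exact cross_order (by omega) u1 (by omega) (by omega) u2 (by omega) hui huj
          · exfalso
            have := order_alpha (n := n) (η := η) (α := α) (β := β)
              (by omega) (by omega) (by omega) (by omega) (by omega) (by omega)
              hcrAj hcrAi
            linarith
        · have hnb : ¬(relPos n η ((η :: ρ).getD i 0) = relPos n η ((η :: ρ).getD (j+1) 0) ∧
              relPos n η ((η :: ρ).getD (i+1) 0) = relPos n η ((η :: ρ).getD j 0)) := by
            rintro ⟨u1, u2⟩
            refine hdf ?_
            rw [rp_inj u1, rp_inj u2]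
            exact Sym2.eq_swap
          have htri : (relPos n η ((η :: ρ).getD i 0) ≤ relPos n η ((η :: ρ).getD (j+1) 0) ∧
              relPos n η ((η :: ρ).getD j 0) ≤ relPos n η ((η :: ρ).getD (i+1) 0)) ∨
              (relPos n η ((η :: ρ).getD (j+1) 0) ≤ relPos n η ((η :: ρ).getD i 0) ∧
              relPos n η ((η :: ρ).getD (i+1) 0) ≤ relPos n η ((η :: ρ).getD j 0)) := by
            omega
          rcases htri with ⟨u1, u2⟩ | ⟨u1, u2⟩
          · exact cross_order (by omega) u1 (by omega) (by omega) u2 (by omega) hui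
              (crossesAt_symm huj)
          · exfalso
            have := order_alpha (n := n) (η := η) (α := α) (β := β)
              (by omega) (by omega) (by omega) (by omega) (by omega) (by omega)
              (crossesAt_symm hcrAj) hcrAi
            linarith
        · have hnb : ¬(relPos n η ((η :: ρ).getD (i+1) 0) = relPos n η ((η :: ρ).getD j 0) ∧
              relPos n η ((η :: ρ).getD i 0) = relPos n η ((η :: ρ).getD (j+1) 0)) := by
            rintro ⟨u1, u2⟩
            refine hdf ?_
            rw [rp_inj u1, rp_inj u2]
            exact Sym2.eq_swap
          have htri : (relPos n η ((η :: ρ).getD (i+1) 0) ≤ relPos n η ((η :: ρ).getD j 0) ∧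
              relPos n η ((η :: ρ).getD (j+1) 0) ≤ relPos n η ((η :: ρ).getD i 0)) ∨
              (relPos n η ((η :: ρ).getD j 0) ≤ relPos n η ((η :: ρ).getD (i+1) 0) ∧
              relPos n η ((η :: ρ).getD i 0) ≤ relPos n η ((η :: ρ).getD (j+1) 0)) := by
            omega
          rcases htri with ⟨u1, u2⟩ | ⟨u1, u2⟩
          · exact cross_order (by omega) u1 (by omega) (by omega) u2 (by omega)
              (crossesAt_symm hui) huj
          · exfalso
            have := order_alpha (n := n) (η := η) (α := α) (β := β)
              (by omega) (by omega) (by omega) (by omega) (by omega) (by omega)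
              hcrAj (crossesAt_symm hcrAi)
            linarith
        · have hnb : ¬(relPos n η ((η :: ρ).getD (i+1) 0) = relPos n η ((η :: ρ).getD (j+1) 0) ∧
              relPos n η ((η :: ρ).getD i 0) = relPos n η ((η :: ρ).getD j 0)) := by
            rintro ⟨u1, u2⟩
            exact hdf (by rw [rp_inj u1, rp_inj u2])
          have htri : (relPos n η ((η :: ρ).getD (i+1) 0) ≤ relPos n η ((η :: ρ).getD (j+1) 0) ∧
              relPos n η ((η :: ρ).getD j 0) ≤ relPos n η ((η :: ρ).getD i 0)) ∨
              (relPos n η ((η :: ρ).getD (j+1) 0) ≤ relPos n η ((η :: ρ).getD (i+1) 0) ∧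
              relPos n η ((η :: ρ).getD i 0) ≤ relPos n η ((η :: ρ).getD j 0)) := by
            omega
          rcases htri with ⟨u1, u2⟩ | ⟨u1, u2⟩
          · exact cross_order (by omega) u1 (by omega) (by omega) u2 (by omega)
              (crossesAt_symm hui) (crossesAt_symm huj)
          · exfalso
            have := order_alpha (n := n) (η := η) (α := α) (β := β)
              (by omega) (by omega) (by omega) (by omega) (by omega) (by omega)
              (crossesAt_symm hcrAj) (crossesAt_symm hcrAi)
            linarith
  · -- (η :: ρ).getD 1 0 ≠ ζ
    intro he
    have hd := hdiff 1 2 (by omega) (by omega)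
    rw [hl1, hl2] at hd
    have h3 : l.getD (2+1) 0 = ζ := by rw [hsh 1]; exact he
    rw [h3] at hd
    exact hd Sym2.eq_swap

/-- The backward direction: prepending `α, ζ` to a T-path from `η` to `β` whose
second vertex is not `ζ` yields a T-path from `α` to `β`. -/
lemma tpath_backward (hn : 3 ≤ n) {ζ η α β : ZMod n} {D D₂ : Set (Sym2 (ZMod n))}
    (hD : IsDissection n D) (hsplit : D = insert s(ζ, η) D₂) (hdm : s(ζ, η) ∉ D₂)
    (hD₂ : IsDissectionOf n {ε : ZMod n | relPos n η ε ≤ relPos n η ζ} D₂)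
    (hβ1 : 0 < relPos n η β) (hβ2 : relPos n η β < relPos n η ζ)
    (hα' : relPos n η ζ < relPos n η α)
    (ρ : List (ZMod n))
    (ht : IsTPath n D η β (η :: ρ)) (hne : (η :: ρ).getD 1 0 ≠ ζ) :
    IsTPath n D α β (α :: ζ :: η :: ρ) := by
  classical
  obtain ⟨hlen, h0, hlast, hW, hcons, hdiff, hnc, hodd, tf, hto, hmono⟩ := ht
  set σ := η :: ρ with hσdef
  have hlc : σ.length = ρ.length + 1 := rfl
  have hself := rp_self (n := n) η
  have hζα := rp_lt η α
  have hζζ := rp_lt η ζ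
  have hζβ := rp_lt η β
  have hσ0 : σ.getD 0 0 = η := rfl
  have hηβ : η ≠ β := by
    intro he
    rw [he] at hβ1
    have := rp_self (n := n) β
    omega
  -- all vertices of σ are in V₂
  have hver : ∀ j, j < σ.length → relPos n η (σ.getD j 0) ≤ relPos n η ζ := by
    intro j hj
    rcases Nat.eq_zero_or_pos j with rfl | hj0
    · rw [hσ0]; omega
    · rcases eq_or_ne j (σ.length - 1) with hje | hjne
      · rw [hje, hlast]; omega
      · have hj1 : j + 1 < σ.length := by omega
        rcases Nat.even_or_odd j with hev | hod
        · obtain ⟨k, hk⟩ : ∃ k, k + 1 = j := ⟨j - 1, by omega⟩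
          have hkodd : Odd k := by rcases hev with ⟨u, hu⟩; exact ⟨u - 1, by omega⟩
          have hd := hodd k hkodd (by omega)
          have h' := (Dends hsplit hD₂ hd).2
          rw [hk] at h'
          exact h'
        · have hd := hodd j hod hj1
          exact (Dends hsplit hD₂ hd).1
  -- characterization of the odd steps of σ
  have hchar : ∀ i, Odd i → i + 1 < σ.length →
      s(σ.getD i 0, σ.getD (i+1) 0) ∈ D₂ ∧
      ((0 < relPos n η (σ.getD i 0) ∧ relPos n η (σ.getD i 0) < relPos n η β ∧
        relPos n η β < relPos n η (σ.getD (i+1) 0) ∧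
        relPos n η (σ.getD (i+1) 0) ≤ relPos n η ζ) ∨
       (0 < relPos n η (σ.getD (i+1) 0) ∧ relPos n η (σ.getD (i+1) 0) < relPos n η β ∧
        relPos n η β < relPos n η (σ.getD i 0) ∧
        relPos n η (σ.getD i 0) ≤ relPos n η ζ)) := by
    intro i hoi hi1
    have heD := hodd i hoi hi1
    have hcrA := hto i hoi hi1
    have hconsi := hcons i hi1
    rcases cross_classify hn hηβ hconsi hcrA with hcr | hdeg
    · unfold Crosses CyclicallyOrdered at hcr
      have hv1 := hver i (by omega)
      have hv2 := hver (i+1) (by omega)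
      have hdich : (0 < relPos n η (σ.getD i 0) ∧ relPos n η (σ.getD i 0) < relPos n η β ∧
          relPos n η β < relPos n η (σ.getD (i+1) 0) ∧
          relPos n η (σ.getD (i+1) 0) ≤ relPos n η ζ) ∨
          (0 < relPos n η (σ.getD (i+1) 0) ∧ relPos n η (σ.getD (i+1) 0) < relPos n η β ∧
          relPos n η β < relPos n η (σ.getD i 0) ∧
          relPos n η (σ.getD i 0) ≤ relPos n η ζ) := by omega
      refine ⟨?_, hdich⟩
      have h' := heD
      rw [hsplit, Set.mem_insert_iff] at h'
      rcases h' with h' | h'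
      · exfalso
        rcases Sym2.eq_iff.mp h' with ⟨h1', h2'⟩ | ⟨h1', h2'⟩
        · have e1 : relPos n η (σ.getD i 0) = relPos n η ζ := by rw [h1']
          have e2 : relPos n η (σ.getD (i+1) 0) = 0 := by rw [h2', rp_self]
          omega
        · have e1 : relPos n η (σ.getD i 0) = 0 := by rw [h1', rp_self]
          omega
      · exact h'
    · exfalso
      have hηβD : s(η, β) ∈ D := by rw [← hdeg]; exact heD
      have honly : ∀ j, Odd j → j + 1 < σ.length → j ≠ i → False := by
        intro j hoj hj1 hji
        have heDj := hodd j hoj hj1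
        rcases cross_classify hn hηβ (hcons j hj1) (hto j hoj hj1) with hcrj | hdegj
        · exact (hD.2 η β _ _ hηβD heDj) hcrj
        · rcases Nat.lt_or_ge j i with hlt | hge
          · exact hdiff j i hlt hi1 (hdegj.trans hdeg.symm)
          · exact hdiff i j (by omega) hj1 (hdeg.trans hdegj.symm)
      have hi1' : i = 1 := by
        by_contra hii
        obtain ⟨k, hk⟩ := hoi
        exact honly 1 odd_one (by omega) (by omega)
      subst hi1'
      rcases Sym2.eq_iff.mp hdeg with ⟨he1, he2⟩ | ⟨he1, he2⟩
      · exact hcons 0 (by omega) (hσ0.trans he1.symm)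
      · rcases eq_or_ne σ.length 3 with h3 | h3
        · have hlast' : σ.getD 2 0 = β := by
            have h'' := hlast
            rw [h3] at h''
            exact h''
          have he2' : σ.getD 2 0 = η := he2
          exact hηβ (he2'.symm.trans hlast')
        · rcases Nat.lt_or_ge σ.length 5 with h5 | h5
          · have hlen4 : σ.length = 4 := by omega
            have hlast' : σ.getD 3 0 = β := by
              have h'' := hlast
              rw [hlen4] at h''
              exact h''
            have hdf := hdiff 1 2 (by omega) (by omega)
            apply hdf
            have he2' : σ.getD 2 0 = η := he2
            show s(σ.getD 1 0, σ.getD 2 0) = s(σ.getD 2 0, σ.getD 3 0)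
            rw [he1, he2', hlast']
            exact Sym2.eq_swap
          · exact honly 3 ⟨1, rfl⟩ (by omega) (by omega)
  -- s(ζ, η) is not a step of σ
  have hnz : ∀ k, k + 1 < σ.length → s(σ.getD k 0, σ.getD (k+1) 0) ≠ s(ζ, η) := by
    intro k hk1 he
    rcases Sym2.eq_iff.mp he with ⟨he1, he2⟩ | ⟨he1, he2⟩
    · rcases Nat.even_or_odd k with hev | hod
      · have hk0 : k ≠ 0 := by
          intro h'
          subst h'
          have : ζ = η := he1.symm.trans hσ0
          rw [this] at hβ2
          omega
        rcases eq_or_ne (k+1) (σ.length - 1) with hje | hjne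
        · rw [hje] at he2
          exact hηβ (he2.symm.trans hlast)
        · have hodd1 : Odd (k+1) := Even.add_one hev
          have hk2 : (k+1) + 1 < σ.length := by omega
          have hch := (hchar (k+1) hodd1 hk2).2
          have h0' : relPos n η (σ.getD (k+1) 0) = 0 := by rw [he2, rp_self]
          omega
      · have hch := (hchar k hod hk1).2
        have e1 : relPos n η (σ.getD k 0) = relPos n η ζ := by rw [he1]
        have e2 : relPos n η (σ.getD (k+1) 0) = 0 := by rw [he2, rp_self]
        omega
    · rcases Nat.even_or_odd k with hev | hod
      · have hk0 : k ≠ 0 := by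
          intro h'
          subst h'
          exact hne he2
        obtain ⟨k', hk'⟩ : ∃ k', k' + 1 = k := ⟨k - 1, by omega⟩
        have hodd' : Odd k' := by rcases hev with ⟨u, hu⟩; exact ⟨u - 1, by omega⟩
        have hch := (hchar k' hodd' (by omega)).2
        have e1 : relPos n η (σ.getD (k'+1) 0) = 0 := by rw [hk', he1, rp_self]
        omega
      · have hch := (hchar k hod hk1).2
        have e1 : relPos n η (σ.getD k 0) = 0 := by rw [he1, rp_self]
        omega
  have hαnotin : ∀ j, j < σ.length → σ.getD j 0 ≠ α := by
    intro j hj he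
    have h' := hver j hj
    rw [he] at h'
    omega
  have hll : (α :: ζ :: σ).length = σ.length + 2 := rfl
  show IsTPath n D α β (α :: ζ :: σ)
  have hmemDk : ∀ k, Odd k → k + 1 < σ.length → s(σ.getD k 0, σ.getD (k+1) 0) ∈ D := by
    intro k h1 h2
    rw [hsplit]
    exact Set.mem_insert_iff.mpr (Or.inr (hchar k h1 h2).1)
  refine ⟨by omega, rfl, ?_, fun i _ => Set.mem_univ _, ?_, ?_, ?_, ?_, ?_⟩
  · -- last vertex
    show (α :: ζ :: σ).getD ((α :: ζ :: σ).length - 1) 0 = β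
    rw [hll, show σ.length + 2 - 1 = (σ.length - 1) + 2 from by omega]
    exact hlast
  · -- consecutive vertices distinct
    intro i hi
    rcases Nat.lt_or_ge i 2 with h2 | h2
    · interval_cases i
      · show α ≠ ζ
        intro he
        have : relPos n η α = relPos n η ζ := by rw [he]
        omega
      · show ζ ≠ η
        intro he
        rw [he] at hβ2
        omega
    · obtain ⟨k, rfl⟩ : ∃ k, i = k + 2 := ⟨i - 2, by omega⟩
      exact hcons k (by omega)
  · -- pairwise different steps
    intro i j hij hj
    rcases Nat.lt_or_ge i 2 with h2 | h2
    · rcases Nat.lt_or_ge j 2 with hj2 | hj2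
      · have hi0 : i = 0 := by omega
        have hj1 : j = 1 := by omega
        subst hi0
        subst hj1
        show s(α, ζ) ≠ s(ζ, η)
        intro he
        rcases Sym2.eq_iff.mp he with ⟨he1, he2⟩ | ⟨he1, he2⟩
        · have : relPos n η α = relPos n η ζ := by rw [he1]
          omega
        · have : relPos n η α = 0 := by rw [he1, rp_self]
          omega
      · obtain ⟨k, rfl⟩ : ∃ k, j = k + 2 := ⟨j - 2, by omega⟩
        have hk1 : k + 1 < σ.length := by omega
        interval_cases i
        · show s(α, ζ) ≠ s(σ.getD k 0, σ.getD (k+1) 0)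
          intro he
          rcases Sym2.eq_iff.mp he with ⟨he1, he2⟩ | ⟨he1, he2⟩
          · exact hαnotin k (by omega) he1.symm
          · exact hαnotin (k+1) (by omega) he1.symm
        · show s(ζ, η) ≠ s(σ.getD k 0, σ.getD (k+1) 0)
          intro he
          exact hnz k hk1 he.symm
    · obtain ⟨k, rfl⟩ : ∃ k, i = k + 2 := ⟨i - 2, by omega⟩
      obtain ⟨k', rfl⟩ : ∃ k', j = k' + 2 := ⟨j - 2, by omega⟩
      exact hdiff k k' (by omega) (by omega)
  · -- no step crosses a diagonal of D
    intro i hi c d hcd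
    have hDe := Dends hsplit hD₂ hcd
    have b1 := rp_lt η c
    have b2 := rp_lt η d
    rcases Nat.lt_or_ge i 2 with h2 | h2
    · interval_cases i
      · show ¬ Crosses n α ζ c d
        have g1 := rp_base' (n := n) η α ζ
        have g2 := rp_base' (n := n) η α c
        have g3 := rp_base' (n := n) η α d
        unfold Crosses CyclicallyOrdered
        omega
      · show ¬ Crosses n ζ η c d
        have g1 := rp_base' (n := n) η ζ η
        have g2 := rp_base' (n := n) η ζ c
        have g3 := rp_base' (n := n) η ζ d
        unfold Crosses CyclicallyOrdered
        omega
    · obtain ⟨k, rfl⟩ : ∃ k, i = k + 2 := ⟨i - 2, by omega⟩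
      exact hnc k (by omega) c d hcd
  · -- odd steps lie in D
    intro i hoi hi
    rcases eq_or_ne i 1 with h1 | h1
    · subst h1
      show s(ζ, η) ∈ D
      rw [hsplit]
      exact Set.mem_insert _ _
    · have h3 : 3 ≤ i := by obtain ⟨k, hk⟩ := hoi; omega
      obtain ⟨k, rfl⟩ : ∃ k, i = k + 2 := ⟨i - 2, by omega⟩
      have hoddk : Odd k := by obtain ⟨u, hu⟩ := hoi; exact ⟨u - 1, by omega⟩
      exact hmemDk k hoddk (by omega)
  · -- the crossing parameters
    have hexA : ∀ i, Odd i → i + 1 < (α :: ζ :: σ).length →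
        ∃ u, CrossesAt n α β ((α :: ζ :: σ).getD i 0) ((α :: ζ :: σ).getD (i+1) 0) u := by
      intro i hoi hi
      rcases eq_or_ne i 1 with h1 | h1
      · subst h1
        have g1 := rp_base' (n := n) η α η
        have g2 := rp_base' (n := n) η α ζ
        have g3 := rp_base' (n := n) η α β
        obtain ⟨u, hu⟩ := cross_exists (n := n) (a := α) (b := β) (c := η) (d := ζ)
          (by omega) (by omega) (by omega)
        exact ⟨u, crossesAt_symm hu⟩
      · have h3 : 3 ≤ i := by obtain ⟨k, hk⟩ := hoi; omega
        obtain ⟨k, rfl⟩ : ∃ k, i = k + 2 := ⟨i - 2, by omega⟩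
        have hoddk : Odd k := by obtain ⟨u, hu⟩ := hoi; exact ⟨u - 1, by omega⟩
        have hch := (hchar k hoddk (by omega)).2
        have g1 := rp_base' (n := n) η α (σ.getD k 0)
        have g2 := rp_base' (n := n) η α (σ.getD (k+1) 0)
        have g3 := rp_base' (n := n) η α β
        show ∃ u, CrossesAt n α β (σ.getD k 0) (σ.getD (k+1) 0) u
        rcases hch with hc | hc
        · obtain ⟨u, hu⟩ := cross_exists (n := n) (a := α) (b := β)
            (c := σ.getD k 0) (d := σ.getD (k+1) 0) (by omega) (by omega) (by omega)
          exact ⟨u, hu⟩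
        · obtain ⟨u, hu⟩ := cross_exists (n := n) (a := α) (b := β)
            (c := σ.getD (k+1) 0) (d := σ.getD k 0) (by omega) (by omega) (by omega)
          exact ⟨u, crossesAt_symm hu⟩
    refine ⟨fun i => if h : ∃ u, CrossesAt n α β ((α :: ζ :: σ).getD i 0)
        ((α :: ζ :: σ).getD (i+1) 0) u then h.choose else 0, ?_, ?_⟩
    · intro i hoi hi
      beta_reduce
      rw [dif_pos (hexA i hoi hi)]
      exact (hexA i hoi hi).choose_spec
    · intro i j hoi hoj hij hj
      have hi : i + 1 < (α :: ζ :: σ).length := by omega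
      beta_reduce
      rw [dif_pos (hexA i hoi hi), dif_pos (hexA j hoj hj)]
      have hui := (hexA i hoi hi).choose_spec
      have huj := (hexA j hoj hj).choose_spec
      have h3j : 3 ≤ j := by
        obtain ⟨u, hu⟩ := hoj
        obtain ⟨v, hv⟩ := hoi
        omega
      obtain ⟨kj, rfl⟩ : ∃ k, j = k + 2 := ⟨j - 2, by omega⟩
      have hoddkj : Odd kj := by obtain ⟨u, hu⟩ := hoj; exact ⟨u - 1, by omega⟩
      have hchj := (hchar kj hoddkj (by omega)).2
      have hujs : CrossesAt n α β (σ.getD kj 0) (σ.getD (kj+1) 0)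
          ((hexA (kj+2) hoj hj).choose) := huj
      rcases eq_or_ne i 1 with h1 | h1
      · subst h1
        have huis : CrossesAt n α β ζ η ((hexA 1 hoi hi).choose) := hui
        rcases hchj with hc | hc
        · exact order_alpha (n := n) (η := η) (α := α) (β := β)
            (c := η) (d := ζ) (c' := σ.getD kj 0) (d' := σ.getD (kj+1) 0)
            (by omega) (by omega) (by omega) (by omega) (by omega) (by omega)
            (crossesAt_symm huis) hujs
        · exact order_alpha (n := n) (η := η) (α := α) (β := β)
            (c := η) (d := ζ) (c' := σ.getD (kj+1) 0) (d' := σ.getD kj 0)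
            (by omega) (by omega) (by omega) (by omega) (by omega) (by omega)
            (crossesAt_symm huis) (crossesAt_symm hujs)
      · have h3i : 3 ≤ i := by obtain ⟨u, hu⟩ := hoi; omega
        obtain ⟨ki, rfl⟩ : ∃ k, i = k + 2 := ⟨i - 2, by omega⟩
        have hoddki : Odd ki := by obtain ⟨u, hu⟩ := hoi; exact ⟨u - 1, by omega⟩
        have hchi := (hchar ki hoddki (by omega)).2
        have huis : CrossesAt n α β (σ.getD ki 0) (σ.getD (ki+1) 0)
            ((hexA (ki+2) hoi hi).choose) := hui
        have hDi := hmemDk ki hoddki (by omega)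
        have hDj := hmemDk kj hoddkj (by omega)
        have hnc2 := hD.2 _ _ _ _ hDi hDj
        have hdf := hdiff ki kj (by omega) (by omega)
        have hmon := hmono ki kj hoddki hoddkj (by omega) (by omega)
        have hcrki := hto ki hoddki (by omega)
        have hcrkj := hto kj hoddkj (by omega)
        have f1 := rp_base' (n := n) η (σ.getD ki 0) (σ.getD (ki+1) 0)
        have f2 := rp_base' (n := n) η (σ.getD ki 0) (σ.getD kj 0)
        have f3 := rp_base' (n := n) η (σ.getD ki 0) (σ.getD (kj+1) 0)
        have b1 := rp_lt η (σ.getD ki 0)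
        have b2 := rp_lt η (σ.getD (ki+1) 0)
        have b3 := rp_lt η (σ.getD kj 0)
        have b4 := rp_lt η (σ.getD (kj+1) 0)
        unfold Crosses CyclicallyOrdered at hnc2
        rcases hchi with hA | hA <;> rcases hchj with hB | hB
        · have hnb : ¬(relPos n η (σ.getD ki 0) = relPos n η (σ.getD kj 0) ∧
              relPos n η (σ.getD (ki+1) 0) = relPos n η (σ.getD (kj+1) 0)) := by
            rintro ⟨u1, u2⟩
            exact hdf (by rw [rp_inj u1, rp_inj u2])
          have htri : (relPos n η (σ.getD ki 0) ≤ relPos n η (σ.getD kj 0) ∧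
              relPos n η (σ.getD (kj+1) 0) ≤ relPos n η (σ.getD (ki+1) 0)) ∨
              (relPos n η (σ.getD kj 0) ≤ relPos n η (σ.getD ki 0) ∧
              relPos n η (σ.getD (ki+1) 0) ≤ relPos n η (σ.getD (kj+1) 0)) := by
            omega
          rcases htri with ⟨u1, u2⟩ | ⟨u1, u2⟩
          · exact order_alpha (n := n) (η := η) (α := α) (β := β)
              u1 (by omega) (by omega) u2 (by omega) (by omega) huis hujs
          · exfalso
            have := cross_order (n := n) (a := η) (b := β)
              (by omega) u1 (by omega) (by omega) u2 (by omega) hcrkj hcrki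
            linarith
        · have hnb : ¬(relPos n η (σ.getD ki 0) = relPos n η (σ.getD (kj+1) 0) ∧
              relPos n η (σ.getD (ki+1) 0) = relPos n η (σ.getD kj 0)) := by
            rintro ⟨u1, u2⟩
            refine hdf ?_
            rw [rp_inj u1, rp_inj u2]
            exact Sym2.eq_swap
          have htri : (relPos n η (σ.getD ki 0) ≤ relPos n η (σ.getD (kj+1) 0) ∧
              relPos n η (σ.getD kj 0) ≤ relPos n η (σ.getD (ki+1) 0)) ∨
              (relPos n η (σ.getD (kj+1) 0) ≤ relPos n η (σ.getD ki 0) ∧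
              relPos n η (σ.getD (ki+1) 0) ≤ relPos n η (σ.getD kj 0)) := by
            omega
          rcases htri with ⟨u1, u2⟩ | ⟨u1, u2⟩
          · exact order_alpha (n := n) (η := η) (α := α) (β := β)
              u1 (by omega) (by omega) u2 (by omega) (by omega) huis (crossesAt_symm hujs)
          · exfalso
            have := cross_order (n := n) (a := η) (b := β)
              (by omega) u1 (by omega) (by omega) u2 (by omega)
              (crossesAt_symm hcrkj) hcrki
            linarith
        · have hnb : ¬(relPos n η (σ.getD (ki+1) 0) = relPos n η (σ.getD kj 0) ∧
              relPos n η (σ.getD ki 0) = relPos n η (σ.getD (kj+1) 0)) := by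
            rintro ⟨u1, u2⟩
            refine hdf ?_
            rw [rp_inj u1, rp_inj u2]
            exact Sym2.eq_swap
          have htri : (relPos n η (σ.getD (ki+1) 0) ≤ relPos n η (σ.getD kj 0) ∧
              relPos n η (σ.getD (kj+1) 0) ≤ relPos n η (σ.getD ki 0)) ∨
              (relPos n η (σ.getD kj 0) ≤ relPos n η (σ.getD (ki+1) 0) ∧
              relPos n η (σ.getD ki 0) ≤ relPos n η (σ.getD (kj+1) 0)) := by
            omega
          rcases htri with ⟨u1, u2⟩ | ⟨u1, u2⟩
          · exact order_alpha (n := n) (η := η) (α := α) (β := β)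
              u1 (by omega) (by omega) u2 (by omega) (by omega)
              (crossesAt_symm huis) hujs
          · exfalso
            have := cross_order (n := n) (a := η) (b := β)
              (by omega) u1 (by omega) (by omega) u2 (by omega)
              hcrkj (crossesAt_symm hcrki)
            linarith
        · have hnb : ¬(relPos n η (σ.getD (ki+1) 0) = relPos n η (σ.getD (kj+1) 0) ∧
              relPos n η (σ.getD ki 0) = relPos n η (σ.getD kj 0)) := by
            rintro ⟨u1, u2⟩
            exact hdf (by rw [rp_inj u1, rp_inj u2])
          have htri : (relPos n η (σ.getD (ki+1) 0) ≤ relPos n η (σ.getD (kj+1) 0) ∧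
              relPos n η (σ.getD kj 0) ≤ relPos n η (σ.getD ki 0)) ∨
              (relPos n η (σ.getD (kj+1) 0) ≤ relPos n η (σ.getD (ki+1) 0) ∧
              relPos n η (σ.getD ki 0) ≤ relPos n η (σ.getD kj 0)) := by
            omega
          rcases htri with ⟨u1, u2⟩ | ⟨u1, u2⟩
          · exact order_alpha (n := n) (η := η) (α := α) (β := β)
              u1 (by omega) (by omega) u2 (by omega) (by omega)
              (crossesAt_symm huis) (crossesAt_symm hujs)
          · exfalso
            have := cross_order (n := n) (a := η) (b := β)
              (by omega) u1 (by omega) (by omega) u2 (by omega)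
              (crossesAt_symm hcrkj) (crossesAt_symm hcrki)
            linarith

end Main
end EarAux

namespace EarAux
section Weight
variable {n : ℕ}
set_option linter.unusedSectionVars false

lemma prod_shift {M : Type*} [CommMonoid M] (k : ℕ) (h : ℕ → M) :
    ∏ i ∈ Finset.range (k + 2), h i = (∏ i ∈ Finset.range k, h (i + 2)) * h 1 * h 0 := by
  rw [Finset.prod_range_succ' h (k+1), Finset.prod_range_succ' (fun i => h (i+1)) k]

lemma weight_shift {K : Type*} [CommGroup K] (f : ZMod n → ZMod n → K)
    (α ζ η : ZMod n) (ρ : List (ZMod n)) :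
    f α ζ / f ζ η * pathWeight n f (η :: ρ) = pathWeight n f (α :: ζ :: η :: ρ) := by
  classical
  unfold pathWeight
  have h1 : (α :: ζ :: η :: ρ).length - 1 = ρ.length + 2 := rfl
  have h2 : (η :: ρ).length - 1 = ρ.length := rfl
  rw [h1, h2]
  simp only [Finset.prod_filter]
  rw [prod_shift ρ.length, prod_shift ρ.length]
  have hev : ∀ i : ℕ, Even (i + 2) ↔ Even i := by
    intro i
    simp [Nat.even_add_one, parity_simps]
  have hod : ∀ i : ℕ, Odd (i + 2) ↔ Odd i := by
    intro i
    simp [Nat.odd_add_one, parity_simps]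
  have hNum : (∏ i ∈ Finset.range ρ.length,
      if Even (i + 2) then f ((α :: ζ :: η :: ρ).getD (i+2) 0)
        ((α :: ζ :: η :: ρ).getD (i+2+1) 0) else 1)
      = ∏ i ∈ Finset.range ρ.length,
        if Even i then f ((η :: ρ).getD i 0) ((η :: ρ).getD (i+1) 0) else 1 := by
    exact Finset.prod_congr rfl fun i _ => if_congr (hev i) rfl rfl
  have hDen : (∏ i ∈ Finset.range ρ.length,
      if Odd (i + 2) then f ((α :: ζ :: η :: ρ).getD (i+2) 0)
        ((α :: ζ :: η :: ρ).getD (i+2+1) 0) else 1)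
      = ∏ i ∈ Finset.range ρ.length,
        if Odd i then f ((η :: ρ).getD i 0) ((η :: ρ).getD (i+1) 0) else 1 := by
    exact Finset.prod_congr rfl fun i _ => if_congr (hod i) rfl rfl
  rw [hNum, hDen]
  norm_num
  rw [div_mul_div_comm]
  congr 1
  · exact mul_comm _ _
  · exact mul_comm _ _

end Weight
end EarAux



/-- **Ear setup.**  `D = {d} ⊔ D₂` is a dissection of the `n`-gon, where `d = {ζ,η}`
divides the polygon into subpolygons `P₁` (vertex set `V₁`, an ear, with interior
`U₁ = {ε : ζ < ε < η}`) and `P₂` (vertex set `V₂`, with interior `U₂ = {ε : η < ε < ζ}`),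
and `D₂` is a dissection of `P₂`.  Let `α ∈ U₁`, `β ∈ U₂`, and let `f : diag(P) → K`
be any map.  The map `S : (α, ζ, η, π₄, …, π_p) ↦ (η, π₄, …, π_p)` is a bijection from
`{π ∈ T(α→β) : π₂ = ζ, π₃ = η}` to `{ρ ∈ T(η→β) : ρ₂ ≠ ζ}`, and
`(f(α,ζ)/f(ζ,η)) · f(S(π)) = f(π)` for every `π` in its domain. -/

theorem ear_bijection_S
    (n : ℕ) (hn : 3 ≤ n) {K : Type*} [PaperSemifield K]
    (ζ η : ZMod n) (hζη : IsInternalDiag n ζ η)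
    (D D₂ : Set (Sym2 (ZMod n)))
    (hD : IsDissection n D)
    (hsplit : D = insert s(ζ, η) D₂) (hdm : s(ζ, η) ∉ D₂)
    (hD₂ : IsDissectionOf n {ε : ZMod n | relPos n η ε ≤ relPos n η ζ} D₂)
    (α β : ZMod n)
    (hα : 0 < relPos n ζ α ∧ relPos n ζ α < relPos n ζ η)
    (hβ : 0 < relPos n η β ∧ relPos n η β < relPos n η ζ)
    (f : ZMod n → ZMod n → K) (hf : SymmOn n Set.univ f) :
    Set.BijOn (fun l : List (ZMod n) => l.drop 2)
      {l : List (ZMod n) | IsTPath n D α β l ∧ l.getD 1 0 = ζ ∧ l.getD 2 0 = η}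
      {l : List (ZMod n) | IsTPath n D η β l ∧ l.getD 1 0 ≠ ζ} ∧
    ∀ l : List (ZMod n), IsTPath n D α β l → l.getD 1 0 = ζ → l.getD 2 0 = η →
      f α ζ / f ζ η * pathWeight n f (l.drop 2) = pathWeight n f l := by
  haveI : NeZero n := ⟨by omega⟩
  have hβ1 := hβ.1
  have hβ2 := hβ.2
  have hα' : relPos n η ζ < relPos n η α := EarAux.alpha_bound hβ.1 hβ.2 hα.1 hα.2
  have hβζ : β ≠ ζ := by
    intro he
    rw [← he] at hβ2
    omega
  -- decomposition of elements of the domain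
  have hdecomp : ∀ l : List (ZMod n), IsTPath n D α β l → l.getD 1 0 = ζ →
      l.getD 2 0 = η → ∃ ρ : List (ZMod n), l = α :: ζ :: η :: ρ := by
    intro l hl h1 h2
    rcases l with _ | ⟨x, _ | ⟨y, _ | ⟨z, ρ⟩⟩⟩
    · exact absurd hl.1 (by simp)
    · exact absurd hl.1 (by simp)
    · -- length 2: second vertex is both ζ and β
      exfalso
      have hlast : [x, y].getD ([x, y].length - 1) 0 = β := hl.2.2.1
      have hy : y = β := hlast
      have hy' : y = ζ := h1
      exact hβζ (hy.symm.trans hy')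
    · have hx : x = α := hl.2.1
      have hy : y = ζ := h1
      have hz : z = η := h2
      subst hx; subst hy; subst hz
      exact ⟨ρ, rfl⟩
  constructor
  · refine ⟨?_, ?_, ?_⟩
    · -- MapsTo
      rintro l ⟨hl, h1, h2⟩
      obtain ⟨ρ, rfl⟩ := hdecomp l hl h1 h2
      have hf' := EarAux.tpath_forward hn hD hsplit hdm hD₂ hβ1 hβ2 hα' ρ hl
      exact ⟨hf'.1, hf'.2⟩
    · -- InjOn
      rintro l ⟨hl, h1, h2⟩ l' ⟨hl', h1', h2'⟩ he
      obtain ⟨ρ, rfl⟩ := hdecomp l hl h1 h2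
      obtain ⟨ρ', rfl⟩ := hdecomp l' hl' h1' h2'
      have : ρ = ρ' := by simpa using he
      rw [this]
    · -- SurjOn
      rintro σ' ⟨hσ, hne⟩
      rcases σ' with _ | ⟨z, ρ⟩
      · exact absurd hσ.1 (by simp)
      · have hz : z = η := hσ.2.1
        rw [hz] at hσ hne
        refine ⟨α :: ζ :: η :: ρ, ⟨?_, rfl, rfl⟩, ?_⟩
        · exact EarAux.tpath_backward hn hD hsplit hdm hD₂ hβ1 hβ2 hα' ρ hσ hne
        · show η :: ρ = z :: ρ
          rw [hz]
  · -- the weights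
    intro l hl h1 h2
    obtain ⟨ρ, rfl⟩ := hdecomp l hl h1 h2
    exact EarAux.weight_shift f α ζ η ρ
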